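/- If the continued fraction expansion of √f has period 2m with 2m ≡ 2 (mod 4), and (c, h) is the fundamental Pell solution, then h·A_{m−1} − (c − 1)·B_{m−1} = 0, where Aₖ/Bₖ are the convergents of √f. -/

import Mathlib

/-- The pair `(rₖ, sₖ)` of the continued fraction algorithm for `√f`:
`r₀ = 0`, `s₀ = 1`, `r_{k+1} = aₖ sₖ − rₖ`, `s_{k+1} = (f − r_{k+1}²)/sₖ`,
where `aₖ = ⌊(√f + rₖ)/sₖ⌋ = ⌊(⌊√f⌋ + rₖ)/sₖ⌋`. -/
def cfRS (f : ℕ) : ℕ → ℤ × ℤ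
  | 0 => (0, 1)
  | k + 1 =>
    let p := cfRS f k
    let a := Int.fdiv ((Nat.sqrt f : ℤ) + p.1) p.2
    let r' := a * p.2 - p.1
    (r', Int.fdiv ((f : ℤ) - r' ^ 2) p.2)

/-- The `k`-th partial quotient `aₖ` of the continued fraction of `√f`. -/
def cfA (f : ℕ) (k : ℕ) : ℤ :=
  Int.fdiv ((Nat.sqrt f : ℤ) + (cfRS f k).1) (cfRS f k).2

/-- Numerators of the convergents of `√f`, shifted by 2:
`cfNum f (k+2) = Aₖ`, with `A₋₂ = 0`, `A₋₁ = 1`. -/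
def cfNum (f : ℕ) : ℕ → ℤ
  | 0 => 0
  | 1 => 1
  | k + 2 => cfA f k * cfNum f (k + 1) + cfNum f k

/-- Denominators of the convergents of `√f`, shifted by 2:
`cfDen f (k+2) = Bₖ`, with `B₋₂ = 1`, `B₋₁ = 0`. -/
def cfDen (f : ℕ) : ℕ → ℤ
  | 0 => 1
  | 1 => 0
  | k + 2 => cfA f k * cfDen f (k + 1) + cfDen f k

/-- `p` is a period of the (eventually periodic) partial quotient sequence of `√f`. -/
def CFIsPeriod (f p : ℕ) : Prop :=
  0 < p ∧ ∀ k, 1 ≤ k → cfA f (k + p) = cfA f k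

/-- `p` is the (minimal) period of the continued fraction expansion of `√f`. -/
def CFPeriod (f p : ℕ) : Prop :=
  CFIsPeriod f p ∧ ∀ q, CFIsPeriod f q → p ≤ q

/-- `(c, h)` is the fundamental (smallest positive) solution of `c² − f h² = 1`. -/
def IsFundamentalPell (f : ℕ) (c h : ℤ) : Prop :=
  0 < c ∧ 0 < h ∧ c ^ 2 - (f : ℤ) * h ^ 2 = 1 ∧
    ∀ c' h' : ℤ, 0 < c' → 0 < h' → c' ^ 2 - (f : ℤ) * h' ^ 2 = 1 → c ≤ c'

namespace CF12

open Real

set_option linter.unusedSectionVars false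
variable {f : ℕ}

private lemma floor_div_int (x : ℝ) {d : ℤ} (hd : 0 < d) : ⌊x / (d : ℝ)⌋ = ⌊x⌋ / d := by
  have hd' : (0 : ℝ) < (d : ℝ) := by exact_mod_cast hd
  refine Int.floor_eq_iff.mpr ⟨?_, ?_⟩
  · rw [le_div_iff₀ hd']
    have h1 : (⌊x⌋ / d) * d ≤ ⌊x⌋ := Int.ediv_mul_le ⌊x⌋ hd.ne'
    calc ((⌊x⌋ / d : ℤ) : ℝ) * d = ((⌊x⌋ / d * d : ℤ) : ℝ) := by push_cast; ring
      _ ≤ (⌊x⌋ : ℝ) := by exact_mod_cast h1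
      _ ≤ x := Int.floor_le x
  · rw [div_lt_iff₀ hd']
    have h1 : ⌊x⌋ < (⌊x⌋ / d + 1) * d := Int.lt_ediv_add_one_mul_self ⌊x⌋ hd
    have h2 : x < (⌊x⌋ : ℝ) + 1 := Int.lt_floor_add_one x
    have h3 : ((⌊x⌋ : ℝ)) + 1 ≤ ((⌊x⌋ / d + 1) * d : ℤ) := by exact_mod_cast h1
    push_cast at h3 ⊢
    linarith

section Basic

variable (hf : 0 < f) (hns : ¬ IsSquare f)
include hf hns

lemma two_le_f : 2 ≤ f := by
  by_contra hh
  have h1 : f = 1 := by omega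
  exact hns (h1 ▸ ⟨1, by norm_num⟩)

lemma g_pos : 1 ≤ Nat.sqrt f := by
  have := Nat.sqrt_pos.mpr hf
  omega

lemma g_lt_xi : (Nat.sqrt f : ℝ) < Real.sqrt f := by
  have h1 : Nat.sqrt f * Nat.sqrt f ≤ f := by have := Nat.sqrt_le' f; nlinarith [Nat.sqrt_le' f]
  have h2 : Nat.sqrt f * Nat.sqrt f ≠ f := fun hsq => hns ⟨Nat.sqrt f, hsq.symm⟩
  have h3 : Nat.sqrt f * Nat.sqrt f < f := lt_of_le_of_ne h1 h2
  rw [show ((Nat.sqrt f : ℝ)) = Real.sqrt ((Nat.sqrt f * Nat.sqrt f : ℕ) : ℝ) by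
    push_cast; rw [show ((Nat.sqrt f : ℝ)) * (Nat.sqrt f : ℝ) = (Nat.sqrt f : ℝ)^2 by ring]
    exact (Real.sqrt_sq (by positivity)).symm]
  exact Real.sqrt_lt_sqrt (by positivity) (by exact_mod_cast h3)

lemma xi_lt_g_add_one : Real.sqrt f < (Nat.sqrt f : ℝ) + 1 := by
  have h1 : f < (Nat.sqrt f + 1) * (Nat.sqrt f + 1) := by have := Nat.lt_succ_sqrt' f; nlinarith [Nat.lt_succ_sqrt' f]
  have h2 : (0 : ℝ) < (Nat.sqrt f : ℝ) + 1 := by positivity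
  rw [show ((Nat.sqrt f : ℝ) + 1) = Real.sqrt (((Nat.sqrt f + 1) * (Nat.sqrt f + 1) : ℕ) : ℝ) by
    push_cast
    rw [show ((Nat.sqrt f : ℝ) + 1) * ((Nat.sqrt f : ℝ) + 1) = ((Nat.sqrt f : ℝ) + 1)^2 by ring]
    exact (Real.sqrt_sq (by positivity)).symm]
  exact Real.sqrt_lt_sqrt (by positivity) (by exact_mod_cast h1)

lemma one_lt_xi : 1 < Real.sqrt f := by
  have := g_lt_xi hf hns
  have := g_pos hf hns
  have h2 : (1 : ℝ) ≤ (Nat.sqrt f : ℝ) := by exact_mod_cast this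
  linarith

lemma sq_xi : Real.sqrt f ^ 2 = f := Real.sq_sqrt (by positivity)

lemma floor_xi : ⌊Real.sqrt f⌋ = (Nat.sqrt f : ℤ) := by
  refine Int.floor_eq_iff.mpr ⟨?_, ?_⟩
  · exact_mod_cast (g_lt_xi hf hns).le
  · exact_mod_cast xi_lt_g_add_one hf hns

lemma irr_xi : Irrational (Real.sqrt f) := irrational_sqrt_natCast_iff.mpr hns

end Basic


section Chain

/-- Main invariant of the `(rₖ, sₖ)` chain. -/
structure Inv (f : ℕ) (k : ℕ) : Prop where
  hS : 0 < (cfRS f k).2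
  hR : ((cfRS f k).1 : ℝ) < Real.sqrt f
  hSR : ((cfRS f k).2 : ℝ) < Real.sqrt f + (cfRS f k).1
  hdvd : (cfRS f k).2 ∣ (f : ℤ) - (cfRS f k).1 ^ 2

/-- Facts relating steps `k` and `k+1` of the chain. -/
structure Step (f : ℕ) (k : ℕ) : Prop where
  inv : Inv f (k + 1)
  sprod : (cfRS f k).2 * (cfRS f (k + 1)).2 = (f : ℤ) - (cfRS f (k + 1)).1 ^ 2
  rlow : Real.sqrt f - (cfRS f k).2 < ((cfRS f (k + 1)).1 : ℝ)
  rlow2 : ((cfRS f k).2 : ℝ) - Real.sqrt f < ((cfRS f (k + 1)).1 : ℝ)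
  hRS : Real.sqrt f - ((cfRS f (k + 1)).1 : ℝ) < ((cfRS f (k + 1)).2 : ℝ)

lemma cfRS_succ_fst (k : ℕ) : (cfRS f (k + 1)).1 = cfA f k * (cfRS f k).2 - (cfRS f k).1 := rfl

lemma cfRS_succ_snd (k : ℕ) :
    (cfRS f (k + 1)).2 = Int.fdiv ((f : ℤ) - (cfRS f (k + 1)).1 ^ 2) (cfRS f k).2 := rfl

variable (hf : 0 < f) (hns : ¬ IsSquare f)
include hf hns

lemma a_eq_floor {k : ℕ} (h : Inv f k) :
    cfA f k = ⌊(Real.sqrt f + (cfRS f k).1) / (cfRS f k).2⌋ := by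
  rw [cfA, Int.fdiv_eq_ediv_of_nonneg _ h.hS.le, floor_div_int _ h.hS]
  congr 1
  rw [Int.floor_add_intCast, floor_xi hf hns]

lemma one_le_a {k : ℕ} (h : Inv f k) : 1 ≤ cfA f k := by
  rw [a_eq_floor hf hns h]
  refine Int.le_floor.mpr ?_
  have hS : (0 : ℝ) < (cfRS f k).2 := by exact_mod_cast h.hS
  rw [le_div_iff₀ hS]
  push_cast
  have := h.hSR
  linarith

lemma step {k : ℕ} (h : Inv f k) : Step f k := by
  have hsq : Real.sqrt f ^ 2 = f := sq_xi hf hns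
  have hS : 0 < (cfRS f k).2 := h.hS
  have hSpos : (0 : ℝ) < ((cfRS f k).2 : ℝ) := by exact_mod_cast hS
  have hS1 : (1 : ℝ) ≤ ((cfRS f k).2 : ℝ) := by exact_mod_cast hS
  have hfloor := a_eq_floor hf hns h
  have hu : (cfA f k : ℝ) * (cfRS f k).2 ≤ Real.sqrt f + (cfRS f k).1 := by
    have h1 : (cfA f k : ℝ) ≤ (Real.sqrt f + (cfRS f k).1) / (cfRS f k).2 := by
      rw [hfloor]; exact Int.floor_le _
    rwa [le_div_iff₀ hSpos] at h1
  have hl : Real.sqrt f + (cfRS f k).1 < ((cfA f k : ℝ) + 1) * (cfRS f k).2 := by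
    have h1 : (Real.sqrt f + (cfRS f k).1) / (cfRS f k).2 < (cfA f k : ℝ) + 1 := by
      rw [hfloor]; exact Int.lt_floor_add_one _
    rwa [div_lt_iff₀ hSpos] at h1
  have ha1 : 1 ≤ cfA f k := one_le_a hf hns h
  have ha1R : (1 : ℝ) ≤ (cfA f k : ℝ) := by exact_mod_cast ha1
  have hR1 : (cfRS f (k + 1)).1 = cfA f k * (cfRS f k).2 - (cfRS f k).1 := rfl
  have hR'cast : ((cfRS f (k + 1)).1 : ℝ) = (cfA f k : ℝ) * (cfRS f k).2 - (cfRS f k).1 := by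
    rw [hR1]; push_cast; ring
  have hR'le : ((cfRS f (k + 1)).1 : ℝ) ≤ Real.sqrt f := by rw [hR'cast]; linarith
  have hR'lt : ((cfRS f (k + 1)).1 : ℝ) < Real.sqrt f :=
    hR'le.lt_of_ne fun hh => (irr_xi hf hns).ne_int _ hh.symm
  have hrlow : Real.sqrt f - (cfRS f k).2 < ((cfRS f (k + 1)).1 : ℝ) := by
    rw [hR'cast]; linarith
  have hrlow2 : ((cfRS f k).2 : ℝ) - Real.sqrt f < ((cfRS f (k + 1)).1 : ℝ) := by
    rw [hR'cast]
    have := h.hR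
    nlinarith
  have hR'neg : -Real.sqrt f < ((cfRS f (k + 1)).1 : ℝ) := by
    have hx := one_lt_xi hf hns
    linarith
  have hfpos : (0 : ℝ) < (f : ℝ) - ((cfRS f (k + 1)).1 : ℝ) ^ 2 := by
    nlinarith [mul_pos (sub_pos.mpr hR'lt) (show (0:ℝ) < Real.sqrt f + (cfRS f (k+1)).1 by linarith)]
  have hfposZ : 0 < (f : ℤ) - (cfRS f (k + 1)).1 ^ 2 := by
    have : ((0 : ℤ) : ℝ) < (((f : ℤ) - (cfRS f (k + 1)).1 ^ 2 : ℤ) : ℝ) := by push_cast; push_cast at hfpos; linarith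
    exact_mod_cast this
  have hdvd' : (cfRS f k).2 ∣ (f : ℤ) - (cfRS f (k + 1)).1 ^ 2 := by
    have hrw : (f : ℤ) - (cfRS f (k + 1)).1 ^ 2 =
        ((f : ℤ) - (cfRS f k).1 ^ 2) +
          (cfRS f k).2 * (2 * cfA f k * (cfRS f k).1 - cfA f k ^ 2 * (cfRS f k).2) := by
      rw [hR1]; ring
    rw [hrw]
    exact dvd_add h.hdvd (Dvd.intro _ rfl)
  have sprod : (cfRS f k).2 * (cfRS f (k + 1)).2 = (f : ℤ) - (cfRS f (k + 1)).1 ^ 2 := by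
    rw [cfRS_succ_snd, Int.fdiv_eq_ediv_of_nonneg _ hS.le]
    exact Int.mul_ediv_cancel' hdvd'
  have hS'pos : 0 < (cfRS f (k + 1)).2 := by
    rcases lt_or_ge 0 (cfRS f (k + 1)).2 with hh | hh
    · exact hh
    · exfalso
      have : (cfRS f k).2 * (cfRS f (k + 1)).2 ≤ 0 := mul_nonpos_of_nonneg_of_nonpos hS.le hh
      omega
  have hS'posR : (0 : ℝ) < ((cfRS f (k + 1)).2 : ℝ) := by exact_mod_cast hS'pos
  have sprodR : ((cfRS f k).2 : ℝ) * ((cfRS f (k + 1)).2 : ℝ) =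
      (f : ℝ) - ((cfRS f (k + 1)).1 : ℝ) ^ 2 := by exact_mod_cast sprod
  have hSR' : ((cfRS f (k + 1)).2 : ℝ) < Real.sqrt f + (cfRS f (k + 1)).1 := by
    have key : ((cfRS f (k+1)).2 : ℝ) * (Real.sqrt f - (cfRS f (k+1)).1) <
        ((cfRS f (k+1)).2 : ℝ) * ((cfRS f k).2 : ℝ) :=
      mul_lt_mul_of_pos_left (by linarith) hS'posR
    nlinarith [sub_pos.mpr hR'lt]
  have hRS' : Real.sqrt f - ((cfRS f (k + 1)).1 : ℝ) < ((cfRS f (k + 1)).2 : ℝ) := by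
    have key : ((cfRS f k).2 : ℝ) * ((cfRS f (k+1)).2 : ℝ) <
        (Real.sqrt f + (cfRS f (k+1)).1) * ((cfRS f (k+1)).2 : ℝ) :=
      mul_lt_mul_of_pos_right (by linarith) hS'posR
    nlinarith [show (0:ℝ) < Real.sqrt f + (cfRS f (k+1)).1 by linarith]
  exact ⟨⟨hS'pos, hR'lt, hSR', Dvd.intro_left _ sprod⟩, sprod, hrlow, hrlow2, hRS'⟩

lemma inv_zero : Inv f 0 := by
  refine ⟨by norm_num [cfRS], by simp [cfRS]; positivity, ?_, by simp [cfRS]⟩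
  have := one_lt_xi hf hns
  simp [cfRS]
  linarith

lemma inv_all (k : ℕ) : Inv f k := by
  induction k with
  | zero => exact inv_zero hf hns
  | succ k ih => exact (step hf hns ih).inv

lemma one_le_a' (k : ℕ) : 1 ≤ cfA f k := one_le_a hf hns (inv_all hf hns k)

end Chain

section Chi

noncomputable def chi (f : ℕ) (k : ℕ) : ℝ := (Real.sqrt f + (cfRS f k).1) / (cfRS f k).2

variable (hf : 0 < f) (hns : ¬ IsSquare f)
include hf hns

lemma chi_zero : chi f 0 = Real.sqrt f := by simp [chi, cfRS]

lemma floor_chi (k : ℕ) : ⌊chi f k⌋ = cfA f k := (a_eq_floor hf hns (inv_all hf hns k)).symm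

lemma fract_chi (k : ℕ) :
    Int.fract (chi f k) = (Real.sqrt f - (cfRS f (k + 1)).1) / (cfRS f k).2 := by
  have h := inv_all hf hns k
  have hSpos : (0 : ℝ) < ((cfRS f k).2 : ℝ) := by exact_mod_cast h.hS
  have hR'cast : ((cfRS f (k + 1)).1 : ℝ) = (cfA f k : ℝ) * (cfRS f k).2 - (cfRS f k).1 := by
    rw [cfRS_succ_fst]; push_cast; ring
  rw [show Int.fract (chi f k) = chi f k - ⌊chi f k⌋ from rfl, floor_chi hf hns, chi, hR'cast]
  field_simp
  ring

lemma chi_succ (k : ℕ) : chi f (k + 1) = (Int.fract (chi f k))⁻¹ := by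
  have h := inv_all hf hns k
  have hst := step hf hns h
  have h' := hst.inv
  have hSpos : (0 : ℝ) < ((cfRS f k).2 : ℝ) := by exact_mod_cast h.hS
  have hS'pos : (0 : ℝ) < ((cfRS f (k + 1)).2 : ℝ) := by exact_mod_cast h'.hS
  have hR'lt : ((cfRS f (k + 1)).1 : ℝ) < Real.sqrt f := h'.hR
  have hsq : Real.sqrt f ^ 2 = f := sq_xi hf hns
  have sprodR : ((cfRS f k).2 : ℝ) * ((cfRS f (k + 1)).2 : ℝ) =
      (f : ℝ) - ((cfRS f (k + 1)).1 : ℝ) ^ 2 := by exact_mod_cast hst.sprod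
  rw [fract_chi hf hns, inv_div, chi, div_eq_div_iff hS'pos.ne' (show Real.sqrt f - ((cfRS f (k+1)).1 : ℝ) ≠ 0 by linarith)]
  linear_combination hsq - sprodR

lemma one_lt_chi (k : ℕ) : 1 < chi f k := by
  have h := inv_all hf hns k
  have hSpos : (0 : ℝ) < ((cfRS f k).2 : ℝ) := by exact_mod_cast h.hS
  rw [chi, lt_div_iff₀ hSpos]
  have := h.hSR
  linarith

end Chi

section Continuants

/-- Generalized continuant numerators for digits starting at position `j`. -/
def gNum (f : ℕ) (j : ℕ) : ℕ → ℤ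
  | 0 => 0
  | 1 => 1
  | n + 2 => cfA f (j + n) * gNum f j (n + 1) + gNum f j n

/-- Generalized continuant denominators for digits starting at position `j`. -/
def gDen (f : ℕ) (j : ℕ) : ℕ → ℤ
  | 0 => 1
  | 1 => 0
  | n + 2 => cfA f (j + n) * gDen f j (n + 1) + gDen f j n

lemma cfNum_eq_gNum : ∀ n, cfNum f n = gNum f 0 n
  | 0 => rfl
  | 1 => rfl
  | n + 2 => by
      rw [cfNum, gNum, cfNum_eq_gNum (n + 1), cfNum_eq_gNum n, Nat.zero_add]

lemma cfDen_eq_gDen : ∀ n, cfDen f n = gDen f 0 n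
  | 0 => rfl
  | 1 => rfl
  | n + 2 => by
      rw [cfDen, gDen, cfDen_eq_gDen (n + 1), cfDen_eq_gDen n, Nat.zero_add]

lemma gDen_shift (j : ℕ) : ∀ n, gDen f j (n + 1) = gNum f (j + 1) n
  | 0 => rfl
  | 1 => by simp [gDen, gNum]
  | n + 2 => by
      rw [show n + 2 + 1 = (n + 1) + 2 from rfl, gDen, gDen_shift j (n + 1), gDen_shift j n,
        gNum, show j + 1 + n = j + (n + 1) from by omega]

lemma gNum_head (j : ℕ) : ∀ n, gNum f j (n + 2) = cfA f j * gNum f (j + 1) (n + 1) + gNum f (j + 2) n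
  | 0 => by simp [gNum]
  | 1 => by simp [gNum]; ring
  | n + 2 => by
      rw [show n + 2 + 2 = (n + 2) + 2 from rfl, gNum, gNum_head j (n + 1), gNum_head j n,
        show gNum f (j + 1) (n + 2 + 1) = cfA f (j + 1 + (n + 1)) * gNum f (j + 1) (n + 2) +
          gNum f (j + 1) (n + 1) from rfl,
        show gNum f (j + 2) (n + 2) = cfA f (j + 2 + n) * gNum f (j + 2) (n + 1) +
          gNum f (j + 2) n from rfl,
        show j + 1 + (n + 1) = j + (n + 2) from by omega,
        show j + 2 + n = j + (n + 2) from by omega]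
      ring

variable (hf : 0 < f) (hns : ¬ IsSquare f)
include hf hns

lemma gNum_nonneg_pos (j : ℕ) : ∀ n, 0 ≤ gNum f j n ∧ 1 ≤ gNum f j (n + 1)
  | 0 => ⟨le_refl 0, le_refl 1⟩
  | n + 1 => by
      obtain ⟨h0, h1⟩ := gNum_nonneg_pos j n
      refine ⟨by linarith, ?_⟩
      rw [gNum]
      have ha := one_le_a' hf hns (j + n)
      nlinarith

lemma gNum_pos (j n : ℕ) : 1 ≤ gNum f j (n + 1) := (gNum_nonneg_pos hf hns j n).2

lemma gDen_nonneg (j n : ℕ) : 0 ≤ gDen f j n := by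
  match n with
  | 0 => norm_num [gDen]
  | 1 => norm_num [gDen]
  | n + 2 =>
    rw [gDen_shift]
    exact le_trans (by norm_num) (gNum_pos hf hns (j + 1) n)

lemma gDen_pos (j n : ℕ) : 1 ≤ gDen f j (n + 2) := by
  rw [gDen_shift]; exact gNum_pos hf hns (j + 1) n

lemma conv_eq : ∀ n, ∀ k, Real.convergent (chi f k) n = (gNum f k (n + 2) : ℚ) / (gDen f k (n + 2) : ℚ)
  | 0 => by
      intro k
      rw [Real.convergent_zero, floor_chi hf hns]
      simp [gNum, gDen]
  | n + 1 => by
      intro k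
      rw [Real.convergent_succ, ← chi_succ hf hns, conv_eq n (k + 1), floor_chi hf hns]
      have hN : (1 : ℚ) ≤ (gNum f (k + 1) (n + 1 + 1) : ℚ) := by
        exact_mod_cast gNum_pos hf hns (k + 1) (n + 1)
      have hD : (1 : ℚ) ≤ (gDen f k (n + 1 + 2) : ℚ) := by
        exact_mod_cast gDen_pos hf hns k (n + 1)
      rw [inv_div]
      have e1 : gDen f k (n + 1 + 2) = gNum f (k + 1) (n + 2) := gDen_shift k (n + 2)
      have e2 : gDen f (k + 1) (n + 2) = gNum f (k + 2) (n + 1) := gDen_shift (k + 1) (n + 1)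
      have e3 : gNum f k (n + 1 + 2) = cfA f k * gNum f (k + 1) (n + 2) + gNum f (k + 2) (n + 1) :=
        gNum_head k (n + 1)
      rw [e1, e2, e3]
      have hNne : (gNum f (k + 1) (n + 2) : ℚ) ≠ 0 :=
        ne_of_gt (lt_of_lt_of_le zero_lt_one hN)
      field_simp
      push_cast
      ring

end Continuants

section Identities

lemma det : ∀ k, cfNum f (k + 1) * cfDen f k - cfNum f k * cfDen f (k + 1) = (-1) ^ k
  | 0 => by norm_num [cfNum, cfDen]
  | k + 1 => by
      have ih := det k
      rw [show k + 1 + 1 = k + 2 from rfl, cfNum, cfDen, pow_succ]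
      linear_combination (-1 : ℤ) * ih

variable (hf : 0 < f) (hns : ¬ IsSquare f)
include hf hns

lemma id12 : ∀ k, (f : ℤ) * cfDen f (k + 1) = (cfRS f k).1 * cfNum f (k + 1) + (cfRS f k).2 * cfNum f k
    ∧ cfNum f (k + 1) = (cfRS f k).1 * cfDen f (k + 1) + (cfRS f k).2 * cfDen f k
  | 0 => by norm_num [cfNum, cfDen, cfRS]
  | k + 1 => by
      obtain ⟨h1, h2⟩ := id12 k
      have hS : (cfRS f k).2 ≠ 0 := (inv_all hf hns k).hS.ne'
      have sprod := (step hf hns (inv_all hf hns k)).sprod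
      have hR' : (cfRS f (k + 1)).1 = cfA f k * (cfRS f k).2 - (cfRS f k).1 := rfl
      have eN : cfNum f (k + 2) = cfA f k * cfNum f (k + 1) + cfNum f k := rfl
      have eD : cfDen f (k + 2) = cfA f k * cfDen f (k + 1) + cfDen f k := rfl
      constructor
      · refine mul_left_cancel₀ hS ?_
        rw [eN, eD]
        linear_combination ((cfRS f (k+1)).1 : ℤ) * h1 - (f : ℤ) * h2 - cfNum f (k+1) * sprod
          - ((f : ℤ) * cfDen f (k+1) - (cfRS f (k+1)).1 * cfNum f (k+1)) * hR'
      · refine mul_left_cancel₀ hS ?_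
        rw [eN, eD]
        linear_combination (-1 : ℤ) * h1 + ((cfRS f (k+1)).1 : ℤ) * h2 - cfDen f (k+1) * sprod
          - (cfNum f (k+1) - (cfRS f (k+1)).1 * cfDen f (k+1)) * hR'

lemma pellval (k : ℕ) :
    cfNum f (k + 1) ^ 2 - (f : ℤ) * cfDen f (k + 1) ^ 2 = (-1) ^ k * (cfRS f k).2 := by
  obtain ⟨h1, h2⟩ := id12 hf hns k
  have hdet := det (f := f) k
  linear_combination cfNum f (k+1) * h2 - cfDen f (k+1) * h1 + (cfRS f k).2 * hdet

lemma cfNum_nonneg (k : ℕ) : 0 ≤ cfNum f k := by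
  rw [cfNum_eq_gNum]; exact (gNum_nonneg_pos hf hns 0 k).1

lemma cfNum_pos (k : ℕ) : 1 ≤ cfNum f (k + 1) := by
  rw [cfNum_eq_gNum]; exact gNum_pos hf hns 0 k

lemma cfDen_nonneg (k : ℕ) : 0 ≤ cfDen f k := by
  rw [cfDen_eq_gDen]; exact gDen_nonneg hf hns 0 k

lemma cfDen_pos (k : ℕ) : 1 ≤ cfDen f (k + 2) := by
  rw [cfDen_eq_gDen]; exact gDen_pos hf hns 0 k

lemma cfNum_step {t : ℕ} (ht : 2 ≤ t) : cfNum f t < cfNum f (t + 1) := by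
  obtain ⟨u, rfl⟩ : ∃ u, t = u + 2 := ⟨t - 2, by omega⟩
  have ha := one_le_a' hf hns (u + 1)
  have h1 := cfNum_pos hf hns (u + 1)
  have h0 := cfNum_pos hf hns u
  have h2 : 1 ≤ cfNum f (u + 2) := cfNum_pos hf hns (u + 1)
  show cfNum f (u + 2) < cfA f (u + 1) * cfNum f (u + 1 + 1) + cfNum f (u + 1)
  nlinarith

lemma cfNum_lt {i j : ℕ} (hi : 2 ≤ i) (hij : i < j) : cfNum f i < cfNum f j := by
  induction j with
  | zero => omega
  | succ j ih =>
      rcases Nat.lt_or_ge i j with hh | hh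
      · exact lt_trans (ih hh) (cfNum_step hf hns (by omega))
      · have : i = j := by omega
        subst this
        exact cfNum_step hf hns hi

lemma cfDen_step (t : ℕ) : cfDen f (t + 1) ≤ cfDen f (t + 2) := by
  have ha := one_le_a' hf hns t
  have h1 := cfDen_nonneg hf hns (t + 1)
  have h0 := cfDen_nonneg hf hns t
  show cfDen f (t + 1) ≤ cfA f t * cfDen f (t + 1) + cfDen f t
  nlinarith

lemma cfDen_le {i j : ℕ} (hi : 1 ≤ i) (hij : i ≤ j) : cfDen f i ≤ cfDen f j := by
  induction j with
  | zero => omega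
  | succ j ih =>
      rcases Nat.lt_or_ge i (j + 1) with hh | hh
      · have hj : 1 ≤ j := by omega
        obtain ⟨u, rfl⟩ : ∃ u, j = u + 1 := ⟨j - 1, by omega⟩
        exact le_trans (ih (by omega)) (cfDen_step hf hns u)
      · have : i = j + 1 := by omega
        subst this
        exact le_refl _

omit hf hns in
lemma coprimeND (k : ℕ) : IsCoprime (cfNum f (k + 2)) (cfDen f (k + 2)) := by
  have hdet := det (f := f) (k + 1)
  rcases Nat.even_or_odd (k + 1) with he | ho
  · refine ⟨cfDen f (k + 1), -cfNum f (k + 1), ?_⟩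
    have h1 : ((-1 : ℤ)) ^ (k + 1) = 1 := he.neg_one_pow
    rw [h1] at hdet
    linear_combination hdet
  · refine ⟨-cfDen f (k + 1), cfNum f (k + 1), ?_⟩
    have h1 : ((-1 : ℤ)) ^ (k + 1) = -1 := ho.neg_one_pow
    rw [h1] at hdet
    linear_combination -hdet

end Identities

section Periodicity

open Filter Topology

variable (hf : 0 < f) (hns : ¬ IsSquare f)
include hf hns

omit hf hns in
lemma gNum_congr {j j' : ℕ} (hdig : ∀ i, cfA f (j + i) = cfA f (j' + i)) :
    ∀ n, gNum f j n = gNum f j' n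
  | 0 => rfl
  | 1 => rfl
  | n + 2 => by
      rw [gNum, gNum, gNum_congr hdig (n + 1), gNum_congr hdig n, hdig n]

omit hf hns in
lemma gDen_congr {j j' : ℕ} (hdig : ∀ i, cfA f (j + i) = cfA f (j' + i)) :
    ∀ n, gDen f j n = gDen f j' n := by
  intro n
  match n with
  | 0 => rfl
  | n + 1 =>
    rw [gDen_shift, gDen_shift]
    exact gNum_congr (fun i => by
      have := hdig (i + 1)
      rwa [show j + (i + 1) = j + 1 + i from by omega,
        show j' + (i + 1) = j' + 1 + i from by omega] at this) n

lemma chi_eq_of_digits {j j' : ℕ} (hdig : ∀ i, cfA f (j + i) = cfA f (j' + i)) :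
    chi f j = chi f j' := by
  have h1 : ∀ n, Real.convergent (chi f j) n = Real.convergent (chi f j') n := by
    intro n
    rw [conv_eq hf hns n j, conv_eq hf hns n j', gNum_congr hdig, gDen_congr hdig]
  have t1 : Tendsto (fun n => ((Real.convergent (chi f j) n : ℚ) : ℝ)) atTop (𝓝 (chi f j)) := by
    have h2 := GenContFract.of_convergence (chi f j)
    have h3 : (GenContFract.of (chi f j)).convs =
        fun n => ((Real.convergent (chi f j) n : ℚ) : ℝ) :=
      funext fun n => Real.convs_eq_convergent (chi f j) n
    rwa [h3] at h2
  have t2 : Tendsto (fun n => ((Real.convergent (chi f j) n : ℚ) : ℝ)) atTop (𝓝 (chi f j')) := by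
    have h2 := GenContFract.of_convergence (chi f j')
    have h3 : (GenContFract.of (chi f j')).convs =
        fun n => ((Real.convergent (chi f j) n : ℚ) : ℝ) :=
      funext fun n => by rw [Real.convs_eq_convergent (chi f j') n, h1 n]
    rwa [h3] at h2
  exact tendsto_nhds_unique t1 t2

lemma rs_eq_of_chi_eq {j j' : ℕ} (hchi : chi f j = chi f j') : cfRS f j = cfRS f j' := by
  have hj := inv_all hf hns j
  have hj' := inv_all hf hns j'
  have hSj : (0 : ℝ) < ((cfRS f j).2 : ℝ) := by exact_mod_cast hj.hS
  have hSj' : (0 : ℝ) < ((cfRS f j').2 : ℝ) := by exact_mod_cast hj'.hS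
  have hcross : (Real.sqrt f + (cfRS f j).1) * (cfRS f j').2 =
      (Real.sqrt f + (cfRS f j').1) * (cfRS f j).2 := by
    rw [chi, chi, div_eq_div_iff hSj.ne' hSj'.ne'] at hchi
    exact hchi
  have hSeq : (cfRS f j).2 = (cfRS f j').2 := by
    by_contra hne
    have hne' : (((cfRS f j').2 - (cfRS f j).2 : ℤ) : ℝ) ≠ 0 := by
      intro hc
      apply hne
      have h9 : (cfRS f j').2 - (cfRS f j).2 = 0 := by exact_mod_cast hc
      omega
    have heq : Real.sqrt f =
        (((cfRS f j').1 * (cfRS f j).2 - (cfRS f j).1 * (cfRS f j').2 : ℤ) : ℝ) /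
          (((cfRS f j').2 - (cfRS f j).2 : ℤ) : ℝ) := by
      rw [eq_div_iff hne']
      push_cast
      linarith [hcross]
    exact (irr_xi hf hns) ⟨((((cfRS f j').1 * (cfRS f j).2 - (cfRS f j).1 * (cfRS f j').2 : ℤ) : ℚ) /
        (((cfRS f j').2 - (cfRS f j).2 : ℤ) : ℚ)), by rw [heq]; push_cast; ring⟩
  have hReq : (cfRS f j).1 = (cfRS f j').1 := by
    have : ((cfRS f j).1 : ℝ) = ((cfRS f j').1 : ℝ) := by
      have hs : ((cfRS f j).2 : ℝ) = ((cfRS f j').2 : ℝ) := by exact_mod_cast hSeq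
      rw [hs] at hcross
      have := mul_right_cancel₀ hSj'.ne' hcross
      linarith
    exact_mod_cast this
  exact Prod.ext hReq hSeq

omit hf hns in
lemma chain_shift {j j' : ℕ} (hbase : cfRS f j = cfRS f j') :
    ∀ t, cfRS f (j + t) = cfRS f (j' + t)
  | 0 => hbase
  | t + 1 => by
      have ih := chain_shift hbase t
      show cfRS f ((j + t) + 1) = cfRS f ((j' + t) + 1)
      simp only [cfRS]
      rw [ih]

omit hf hns in
lemma cfA_congr {j j' : ℕ} (h : cfRS f j = cfRS f j') : cfA f j = cfA f j' := by
  unfold cfA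
  rw [h]

lemma period_chain {p : ℕ} (hp : CFIsPeriod f p) : ∀ k, 1 ≤ k → cfRS f (k + p) = cfRS f k := by
  have hdig : ∀ i, cfA f ((1 + p) + i) = cfA f (1 + i) := by
    intro i
    have := hp.2 (1 + i) (by omega)
    rwa [show 1 + i + p = 1 + p + i from by omega] at this
  have hbase : cfRS f (1 + p) = cfRS f 1 :=
    rs_eq_of_chi_eq hf hns (chi_eq_of_digits hf hns hdig)
  intro k hk
  obtain ⟨t, rfl⟩ : ∃ t, k = 1 + t := ⟨k - 1, by omega⟩
  have := chain_shift hbase t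
  rwa [show 1 + p + t = 1 + t + p from by omega] at this

lemma cfRS_one : cfRS f 1 = ((Nat.sqrt f : ℤ), (f : ℤ) - (Nat.sqrt f : ℤ) ^ 2) := by
  have h0 : cfRS f 0 = (0, 1) := rfl
  show (_, _) = _
  simp only [cfRS, h0, Int.fdiv_one, add_zero, mul_one, sub_zero]

lemma R_eq_g_of_S_one {j : ℕ} (hj : 1 ≤ j) (hS1 : (cfRS f j).2 = 1) :
    (cfRS f j).1 = (Nat.sqrt f : ℤ) := by
  obtain ⟨u, rfl⟩ : ∃ u, j = u + 1 := ⟨j - 1, by omega⟩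
  have hinv := inv_all hf hns (u + 1)
  have hRS := (step hf hns (inv_all hf hns u)).hRS
  have hS1R : ((cfRS f (u + 1)).2 : ℝ) = 1 := by rw [hS1]; norm_num
  rw [hS1R] at hRS
  have h1 : (cfRS f (u + 1)).1 ≤ ⌊Real.sqrt f⌋ := Int.le_floor.mpr hinv.hR.le
  have h2 : ⌊Real.sqrt f⌋ < (cfRS f (u + 1)).1 + 1 := by
    refine Int.floor_lt.mpr ?_
    push_cast
    linarith
  rw [floor_xi hf hns] at h1 h2
  omega

lemma s_one_chain {j : ℕ} (hj : 1 ≤ j) (hS1 : (cfRS f j).2 = 1) :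
    cfRS f (j + 1) = cfRS f 1 := by
  have hR := R_eq_g_of_S_one hf hns hj hS1
  have hrs : cfRS f j = ((Nat.sqrt f : ℤ), 1) := Prod.ext hR hS1
  show (_, _) = _
  simp only [cfRS, hrs, Int.fdiv_one, cfRS_one hf hns]
  rw [Prod.mk.injEq]
  constructor <;> ring_nf

lemma s_one_period {j : ℕ} (hj : 1 ≤ j) (hS1 : (cfRS f j).2 = 1) : CFIsPeriod f j := by
  refine ⟨hj, fun k hk => ?_⟩
  obtain ⟨t, rfl⟩ : ∃ t, k = 1 + t := ⟨k - 1, by omega⟩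
  refine cfA_congr ?_
  have := chain_shift (s_one_chain hf hns hj hS1) t
  rwa [show j + 1 + t = 1 + t + j from by omega] at this

lemma s_one_dvd_period {p j : ℕ} (hper : CFPeriod f p) (hj : 1 ≤ j)
    (hS1 : (cfRS f j).2 = 1) : p ∣ j := by
  have pc := period_chain hf hns hper.1
  have hmod : ∀ q t, 1 ≤ t → cfRS f (t + q * p) = cfRS f t := by
    intro q
    induction q with
    | zero => intro t _; simp
    | succ q ih =>
        intro t ht
        have h1 := pc (t + q * p) (by omega)
        rw [show t + (q + 1) * p = t + q * p + p from by ring] at *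
        rw [h1]
        exact ih t ht
  rcases Nat.eq_zero_or_pos (j % p) with h0 | hpos
  · exact Nat.dvd_of_mod_eq_zero h0
  · exfalso
    have hdecomp : j = j % p + (j / p) * p := by
      rw [Nat.mod_add_div']
    have hSmod : (cfRS f (j % p)).2 = 1 := by
      have := hmod (j / p) (j % p) hpos
      rw [← hdecomp] at this
      rw [← this, hS1]
    have hper2 := hper.2 (j % p) (s_one_period hf hns hpos hSmod)
    have : j % p < p := Nat.mod_lt j hper.1.1
    omega

lemma solution_convergent {c h : ℤ} (hc : 0 < c) (hh : 0 < h)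
    (hp : c ^ 2 - (f : ℤ) * h ^ 2 = 1) :
    ∃ n, c = cfNum f (n + 2) ∧ h = cfDen f (n + 2) ∧ Odd n ∧ (cfRS f (n + 1)).2 = 1 := by
  have hsq : Real.sqrt f ^ 2 = f := sq_xi hf hns
  have hxi1 : 1 < Real.sqrt f := one_lt_xi hf hns
  have hcR : (0 : ℝ) < (c : ℝ) := by exact_mod_cast hc
  have hhR : (0 : ℝ) < (h : ℝ) := by exact_mod_cast hh
  have hpR : ((c : ℝ)) ^ 2 - (f : ℝ) * (h : ℝ) ^ 2 = 1 := by exact_mod_cast hp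
  have key : ((c : ℝ) - h * Real.sqrt f) * ((c : ℝ) + h * Real.sqrt f) = 1 := by
    linear_combination hpR - ((h:ℝ))^2 * hsq
  have hY : (0 : ℝ) < (c : ℝ) + h * Real.sqrt f := by nlinarith
  have hX : (0 : ℝ) < (c : ℝ) - h * Real.sqrt f := by
    rcases lt_or_ge 0 ((c : ℝ) - h * Real.sqrt f) with hx | hx
    · exact hx
    · nlinarith
  have hchZ : h < c := by nlinarith [hf]
  have hch : (h : ℝ) < c := by exact_mod_cast hchZ
  have hY2h : 2 * (h : ℝ) < (c : ℝ) + h * Real.sqrt f := by nlinarith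
  -- the rational number c/h
  set q : ℚ := (c : ℚ) / (h : ℚ) with hq
  have hdenle : (q.den : ℤ) ≤ h := by
    have hdvd : ((q.den : ℤ)) ∣ h := by
      rw [hq, ← Rat.divInt_eq_div]
      exact Rat.den_dvd c h
    exact Int.le_of_dvd hh hdvd
  have hqcast : ((q : ℚ) : ℝ) = (c : ℝ) / (h : ℝ) := by
    rw [hq, Rat.cast_div, Rat.cast_intCast, Rat.cast_intCast]
  have habs : |Real.sqrt f - (q : ℝ)| < 1 / (2 * (q.den : ℝ) ^ 2) := by
    have e1 : Real.sqrt f - ((q : ℚ) : ℝ) = -(((c : ℝ) - h * Real.sqrt f) / h) := by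
      rw [hqcast]
      field_simp
      ring
    rw [e1, abs_neg, abs_of_pos (div_pos hX hhR)]
    have hdenpos : (0 : ℝ) < (q.den : ℝ) := by
      exact_mod_cast Nat.pos_of_ne_zero q.den_nz
    have hdenle' : (q.den : ℝ) ≤ (h : ℝ) := by exact_mod_cast hdenle
    have step1 : ((c : ℝ) - h * Real.sqrt f) / h < 1 / (2 * (h : ℝ) ^ 2) := by
      rw [div_lt_div_iff₀ hhR (by positivity)]
      nlinarith [key, hY2h, mul_pos hX hhR]
    refine lt_of_lt_of_le step1 ?_
    apply one_div_le_one_div_of_le (by positivity)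
    nlinarith
  obtain ⟨n, hn⟩ := Real.exists_rat_eq_convergent habs
  refine ⟨n, ?_⟩
  have hconv : Real.convergent (Real.sqrt f) n =
      (cfNum f (n + 2) : ℚ) / (cfDen f (n + 2) : ℚ) := by
    rw [← chi_zero hf hns, conv_eq hf hns n 0, cfNum_eq_gNum, cfDen_eq_gDen]
  rw [hconv] at hn
  have hDpos : 0 < cfDen f (n + 2) := cfDen_pos hf hns n
  have hDQ : ((cfDen f (n + 2) : ℤ) : ℚ) ≠ 0 := by
    exact_mod_cast hDpos.ne'
  have hhQ : ((h : ℤ) : ℚ) ≠ 0 := by exact_mod_cast hh.ne'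
  have hcross : c * cfDen f (n + 2) = cfNum f (n + 2) * h := by
    have := hn
    rw [hq, div_eq_div_iff hhQ hDQ] at this
    exact_mod_cast this
  have hch_cop : IsCoprime c h := ⟨c, -(f : ℤ) * h, by linear_combination hp⟩
  have hND_cop : IsCoprime (cfNum f (n + 2)) (cfDen f (n + 2)) := coprimeND n
  have hdvd1 : h ∣ cfDen f (n + 2) :=
    (hch_cop.symm).dvd_of_dvd_mul_left ⟨cfNum f (n + 2), by linear_combination hcross⟩
  have hdvd2 : cfDen f (n + 2) ∣ h :=
    (hND_cop.symm).dvd_of_dvd_mul_left ⟨c, by linear_combination -hcross⟩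
  have hhD : h = cfDen f (n + 2) := Int.dvd_antisymm hh.le hDpos.le hdvd1 hdvd2
  have hcN : c = cfNum f (n + 2) := by
    have hD0 : cfDen f (n + 2) ≠ 0 := hDpos.ne'
    refine mul_right_cancel₀ hD0 ?_
    rw [hcross, hhD]
  have hpell := pellval hf hns (n + 1)
  rw [← hcN, ← hhD] at hpell
  rw [hp] at hpell
  have hSpos := (inv_all hf hns (n + 1)).hS
  rcases Nat.even_or_odd (n + 1) with he | ho
  · have h1 : ((-1 : ℤ)) ^ (n + 1) = 1 := he.neg_one_pow
    rw [h1, one_mul] at hpell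
    exact ⟨hcN, hhD, by rcases he with ⟨t, ht⟩; exact ⟨t - 1, by omega⟩, hpell.symm⟩
  · exfalso
    have h1 : ((-1 : ℤ)) ^ (n + 1) = -1 := ho.neg_one_pow
    rw [h1] at hpell
    omega

end Periodicity

section Symmetry

variable (hf : 0 < f) (hns : ¬ IsSquare f)
include hf hns

lemma a_rev {j : ℕ} (hj : 1 ≤ j) :
    cfA f j = ⌊(Real.sqrt f + ((cfRS f (j + 1)).1 : ℝ)) / ((cfRS f j).2 : ℝ)⌋ := by
  obtain ⟨u, rfl⟩ : ∃ u, j = u + 1 := ⟨j - 1, by omega⟩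
  have hinv := inv_all hf hns (u + 1)
  have hRS := (step hf hns (inv_all hf hns u)).hRS
  have hSpos : (0 : ℝ) < ((cfRS f (u + 1)).2 : ℝ) := by exact_mod_cast hinv.hS
  have hR2 : ((cfRS f (u + 2)).1 : ℝ) =
      (cfA f (u + 1) : ℝ) * ((cfRS f (u + 1)).2 : ℝ) - ((cfRS f (u + 1)).1 : ℝ) := by
    rw [cfRS_succ_fst]; push_cast; ring
  refine (Int.floor_eq_iff.mpr ⟨?_, ?_⟩).symm
  · rw [le_div_iff₀ hSpos, hR2]
    have := hinv.hR.le
    linarith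
  · rw [div_lt_iff₀ hSpos, hR2]
    push_cast
    linarith

lemma rev_sym {m : ℕ} (hm1 : 1 ≤ m) (hSp : (cfRS f (2 * m)).2 = 1) :
    (cfRS f (m + 1)).1 = (cfRS f m).1 := by
  have key : ∀ j, 1 ≤ j → j ≤ m →
      (cfRS f (2 * m + 1 - j)).1 = (cfRS f j).1 ∧ (cfRS f (2 * m - j)).2 = (cfRS f j).2 := by
    intro j
    induction j with
    | zero => intro h; omega
    | succ j ih =>
        intro _ hjm
        rcases Nat.eq_zero_or_pos j with rfl | hj1
        · -- base case j + 1 = 1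
          have hg : (cfRS f (2 * m)).1 = (Nat.sqrt f : ℤ) :=
            R_eq_g_of_S_one hf hns (by omega) hSp
          constructor
          · rw [show 2 * m + 1 - 1 = 2 * m from by omega, hg, cfRS_one hf hns]
          · have hs := (step hf hns (inv_all hf hns (2 * m - 1))).sprod
            rw [show 2 * m - 1 + 1 = 2 * m from by omega, hSp, mul_one, hg] at hs
            rw [show (2 * m - 1 : ℕ) = 2 * m - 1 from rfl, hs, cfRS_one hf hns]
        · -- inductive step
          obtain ⟨hR_ih, hS_ih⟩ := ih (by omega) (by omega)
          set u := 2 * m - (j + 1) with hu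
          have hu1 : 2 * m - j = u + 1 := by omega
          have hu2 : 2 * m + 1 - j = u + 2 := by omega
          have hu3 : 2 * m + 1 - (j + 1) = u + 1 := by omega
          have hum : 1 ≤ u := by omega
          rw [hu2] at hR_ih
          rw [hu1] at hS_ih
          have adig : cfA f (u + 1) = cfA f j := by
            rw [a_rev hf hns (show 1 ≤ u + 1 by omega), hR_ih, hS_ih,
              ← a_eq_floor hf hns (inv_all hf hns j)]
          have goal1 : (cfRS f (u + 1)).1 = (cfRS f (j + 1)).1 := by
            have e1 : (cfRS f (u + 2)).1 = cfA f (u + 1) * (cfRS f (u + 1)).2 - (cfRS f (u + 1)).1 :=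
              cfRS_succ_fst (u + 1)
            have e2 : (cfRS f (j + 1)).1 = cfA f j * (cfRS f j).2 - (cfRS f j).1 :=
              cfRS_succ_fst j
            rw [hR_ih, adig, hS_ih] at e1
            omega
          have goal2 : (cfRS f u).2 = (cfRS f (j + 1)).2 := by
            have s1 := (step hf hns (inv_all hf hns u)).sprod
            have s2 := (step hf hns (inv_all hf hns j)).sprod
            rw [goal1, hS_ih] at s1
            have hSne : (cfRS f j).2 ≠ 0 := (inv_all hf hns j).hS.ne'
            have : (cfRS f j).2 * (cfRS f u).2 = (cfRS f j).2 * (cfRS f (j + 1)).2 := by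
              rw [s2, ← s1]; ring
            exact mul_left_cancel₀ hSne this
          exact ⟨by rw [hu3]; exact goal1, by rw [hu]; exact goal2⟩
  have hmm := (key m hm1 le_rfl).1
  rwa [show 2 * m + 1 - m = m + 1 from by omega] at hmm

end Symmetry

section PellPowers

lemma pow_ge {d : ℤ} (hd : 0 < d) {a₁ : Pell.Solution₁ d} (hx : 1 < a₁.x) (hy : 0 < a₁.y) :
    ∀ k, a₁.x ≤ (a₁ ^ (k + 1)).x ∧ a₁.y ≤ (a₁ ^ (k + 1)).y := by
  intro k
  induction k with
  | zero => rw [pow_one]; exact ⟨le_rfl, le_rfl⟩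
  | succ k ih =>
      have hX := ih.1
      have hY := ih.2
      have hxp : 0 < (a₁ ^ (k + 1)).x := Pell.Solution₁.x_pow_pos (by omega) _
      rw [pow_succ, Pell.Solution₁.x_mul, Pell.Solution₁.y_mul]
      have t1 : a₁.x * a₁.x ≤ (a₁ ^ (k + 1)).x * a₁.x :=
        mul_le_mul_of_nonneg_right hX (by omega)
      have t2 : 0 < d * ((a₁ ^ (k + 1)).y * a₁.y) :=
        mul_pos hd (mul_pos (lt_of_lt_of_le hy hY) hy)
      have t3 : a₁.y * 1 ≤ a₁.y * (a₁ ^ (k + 1)).x := by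
        apply mul_le_mul_of_nonneg_left (by omega) (by omega)
      have t4 : 0 ≤ (a₁ ^ (k + 1)).y * a₁.x := mul_nonneg (by omega) (by omega)
      constructor
      · nlinarith
      · nlinarith [Pell.Solution₁.y_mul (a₁ ^ (k + 1)) a₁]

lemma pow_big {d : ℤ} (hd : 0 < d) {a₁ : Pell.Solution₁ d} (hx : 1 < a₁.x) (hy : 0 < a₁.y)
    {n : ℕ} (hn : 2 ≤ n) : 2 * a₁.x ^ 2 - 1 ≤ (a₁ ^ n).x := by
  obtain ⟨k, rfl⟩ : ∃ k, n = k + 2 := ⟨n - 2, by omega⟩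
  obtain ⟨hX, hY⟩ := pow_ge hd hx hy k
  have hprop := a₁.prop
  have hxp : 0 < (a₁ ^ (k + 1)).x := Pell.Solution₁.x_pow_pos (by omega) _
  have hxmul : (a₁ ^ (k + 2)).x =
      (a₁ ^ (k + 1)).x * a₁.x + d * ((a₁ ^ (k + 1)).y * a₁.y) := by
    rw [show k + 2 = (k + 1) + 1 from rfl, pow_succ, Pell.Solution₁.x_mul]
  rw [hxmul]
  have t1 : a₁.x * a₁.x ≤ (a₁ ^ (k + 1)).x * a₁.x :=
    mul_le_mul_of_nonneg_right hX (by omega)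
  have t2 : d * (a₁.y * a₁.y) ≤ d * ((a₁ ^ (k + 1)).y * a₁.y) := by
    apply mul_le_mul_of_nonneg_left (mul_le_mul_of_nonneg_right hY (by omega)) (by omega)
  nlinarith

end PellPowers

section Arith

lemma arith1 {fZ c h : ℤ} (hpell : c ^ 2 - fZ * h ^ 2 = 1) (hc : 0 < c) (hh : 0 < h)
    (hf2 : 2 ≤ fZ) : 2 ≤ c := by nlinarith [sq_nonneg (c - 1), sq_nonneg (h - 1)]

lemma arith2 {x c : ℤ} (h1 : 2 * x ^ 2 - 1 ≤ c) (h2 : c ≤ x) (h3 : 2 ≤ c) : False := by nlinarith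

lemma arith4 {x c : ℤ} (h2 : c ≤ x) (h0 : 0 ≤ c) : 2 * c ^ 2 - 1 ≤ 2 * x ^ 2 - 1 := by nlinarith

lemma arith3 {fZ c h A B c₁ s : ℤ} (hs1 : 1 ≤ s) (hc₁pos : 0 < c₁)
    (e_c : s * c₁ = A ^ 2 + fZ * B ^ 2) (hA1 : 1 ≤ A) (hAle : A ≤ c - 1) (hB1 : 1 ≤ B)
    (hBle : B ≤ h) (hpell : c ^ 2 - fZ * h ^ 2 = 1) (hf2 : 2 ≤ fZ) (hc2 : 2 ≤ c) :
    c₁ ≤ 2 * c ^ 2 - 2 * c := by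
  have h1' : c₁ ≤ s * c₁ := le_mul_of_one_le_left hc₁pos.le hs1
  rw [e_c] at h1'
  have hA2 : A ^ 2 ≤ (c - 1) ^ 2 := by nlinarith
  have hB2 : B ^ 2 ≤ h ^ 2 := by nlinarith
  nlinarith

end Arith

end CF12

set_option maxHeartbeats 1000000 in
theorem stmt_12 (f m : ℕ) (hf : 0 < f) (hns : ¬ IsSquare f) (hm : Odd m)
    (hper : CFPeriod f (2 * m)) (c h : ℤ) (hfund : IsFundamentalPell f c h) :
    h * cfNum f (m + 1) - (c - 1) * cfDen f (m + 1) = 0 := by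
  obtain ⟨hc, hh, hpell, hmin⟩ := hfund
  have hm1 : 1 ≤ m := by rcases hm with ⟨t, rfl⟩; omega
  obtain ⟨n₀, hcN, hhD, hn₀odd, hS1⟩ := CF12.solution_convergent hf hns hc hh hpell
  have hdvd := CF12.s_one_dvd_period hf hns hper (by omega) hS1
  have hne : n₀ + 1 = 2 * m := by
    by_contra hne
    have hge : 2 * m + 1 ≤ n₀ + 1 := by
      rcases hdvd with ⟨q, hq⟩
      rcases Nat.lt_or_ge q 2 with hq2 | hq2
      · interval_cases q
        · rw [Nat.mul_zero] at hq; omega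
        · rw [Nat.mul_one] at hq; omega
      · have h4 : 2 * m * 2 ≤ 2 * m * q := Nat.mul_le_mul_left _ hq2
        omega
    set j' := n₀ + 1 - 2 * m with hj'
    have hj'1 : 1 ≤ j' := by omega
    have hSj' : (cfRS f j').2 = 1 := by
      have hpc := CF12.period_chain hf hns hper.1 j' hj'1
      rw [show j' + 2 * m = n₀ + 1 from by omega] at hpc
      rw [← hpc, hS1]
    have hj'even : Even j' := by
      rcases hn₀odd with ⟨t, ht⟩
      exact ⟨t + 1 - m, by omega⟩
    have hpj' := CF12.pellval hf hns j'
    rw [hj'even.neg_one_pow, one_mul, hSj'] at hpj'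
    have hNp : 1 ≤ cfNum f (j' + 1) := CF12.cfNum_pos hf hns j'
    have hDp : 1 ≤ cfDen f (j' + 1) := by
      have := CF12.cfDen_pos hf hns (j' - 1)
      rwa [show j' - 1 + 2 = j' + 1 from by omega] at this
    have hminapp := hmin (cfNum f (j' + 1)) (cfDen f (j' + 1))
      (lt_of_lt_of_le zero_lt_one hNp) (lt_of_lt_of_le zero_lt_one hDp)
      (by linear_combination hpj')
    have hlt : cfNum f (j' + 1) < cfNum f (n₀ + 2) :=
      CF12.cfNum_lt hf hns (by omega) (by omega)
    rw [← hcN] at hlt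
    omega
  have hc2m : c = cfNum f (2 * m + 1) := by
    rw [hcN, show n₀ + 2 = 2 * m + 1 from by omega]
  have hh2m : h = cfDen f (2 * m + 1) := by
    rw [hhD, show n₀ + 2 = 2 * m + 1 from by omega]
  have hSp : (cfRS f (2 * m)).2 = 1 := by
    rw [show 2 * m = n₀ + 1 from by omega]
    exact hS1
  have hmid := CF12.rev_sym hf hns hm1 hSp
  have has : 2 * (cfRS f m).1 = cfA f m * (cfRS f m).2 := by
    have hstep := CF12.cfRS_succ_fst (f := f) m
    rw [hmid] at hstep
    omega
  obtain ⟨h1, h2⟩ := CF12.id12 hf hns m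
  set A := cfNum f (m + 1) with hA
  set B := cfDen f (m + 1) with hB
  set A' := cfNum f m with hA'
  set B' := cfDen f m with hB'
  set a := cfA f m with ha
  set r := (cfRS f m).1 with hr
  set s := (cfRS f m).2 with hs
  have pells : A ^ 2 - (f : ℤ) * B ^ 2 = -s := by
    have hpv := CF12.pellval hf hns m
    rw [hm.neg_one_pow] at hpv
    linarith
  have hs1 : 1 ≤ s := (CF12.inv_all hf hns m).hS
  have hA1 : 1 ≤ A := CF12.cfNum_pos hf hns m
  have hB1 : 1 ≤ B := by
    have := CF12.cfDen_pos hf hns (m - 1)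
    rwa [show m - 1 + 2 = m + 1 from by omega] at this
  have hA'0 : 0 ≤ A' := CF12.cfNum_nonneg hf hns m
  have hB'0 : 0 ≤ B' := CF12.cfDen_nonneg hf hns m
  have ha1 : 1 ≤ a := CF12.one_le_a' hf hns m
  set c₁ := a * A * B + A * B' + A' * B with hc₁
  set h₁ := a * B ^ 2 + 2 * B * B' with hh₁
  have e_c : s * c₁ = A ^ 2 + (f : ℤ) * B ^ 2 := by
    rw [hc₁]
    linear_combination (-(A)) * h2 - B * h1 + (-(A * B)) * has
  have e_h : s * h₁ = 2 * A * B := by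
    rw [hh₁]
    linear_combination (-2 * B) * h2 + (-(B ^ 2)) * has
  have pell₁ : c₁ ^ 2 - (f : ℤ) * h₁ ^ 2 = 1 := by
    have k1 : s ^ 2 * (c₁ ^ 2 - (f : ℤ) * h₁ ^ 2) = s ^ 2 * 1 := by
      linear_combination (s * c₁ + A ^ 2 + (f : ℤ) * B ^ 2) * e_c
        - (f : ℤ) * (s * h₁ + 2 * A * B) * e_h + (A ^ 2 - (f : ℤ) * B ^ 2 - s) * pells
    exact mul_left_cancel₀ (pow_ne_zero 2 ((lt_of_lt_of_le zero_lt_one hs1).ne' : s ≠ 0)) k1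
  have hc₁pos : 0 < c₁ := by
    have p1 : 0 < a * A * B :=
      mul_pos (mul_pos (lt_of_lt_of_le zero_lt_one ha1) (lt_of_lt_of_le zero_lt_one hA1))
        (lt_of_lt_of_le zero_lt_one hB1)
    have p2 : 0 ≤ A * B' := mul_nonneg (by linarith) hB'0
    have p3 : 0 ≤ A' * B := mul_nonneg hA'0 (by linarith)
    rw [hc₁]
    linarith
  have hh₁pos : 0 < h₁ := by
    have p1 : 0 < a * B ^ 2 :=
      mul_pos (lt_of_lt_of_le zero_lt_one ha1) (by positivity)
    have p2 : 0 ≤ 2 * B * B' := mul_nonneg (by linarith) hB'0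
    rw [hh₁]
    linarith
  have hf2 : 2 ≤ (f : ℤ) := by exact_mod_cast CF12.two_le_f hf hns
  have hc2 : 2 ≤ c := CF12.arith1 hpell hc hh hf2
  have hAle : A ≤ c - 1 := by
    have := CF12.cfNum_lt hf hns (show 2 ≤ m + 1 by omega) (show m + 1 < 2 * m + 1 by omega)
    rw [← hc2m] at this
    omega
  have hBle : B ≤ h := by
    have := CF12.cfDen_le hf hns (show 1 ≤ m + 1 by omega) (show m + 1 ≤ 2 * m + 1 by omega)
    rwa [← hh2m] at this
  have hc₁le : c₁ ≤ 2 * c ^ 2 - 2 * c :=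
    CF12.arith3 hs1 hc₁pos e_c hA1 hAle hB1 hBle hpell hf2 hc2
  -- mathlib Pell machinery
  have hdpos : 0 < (f : ℤ) := by omega
  have hdns : ¬ IsSquare (f : ℤ) := by
    rintro ⟨t, ht⟩
    refine hns ⟨t.natAbs, ?_⟩
    have h9 : ((t.natAbs * t.natAbs : ℕ) : ℤ) = (f : ℤ) := by
      rw [Int.natAbs_mul_self]
      exact ht.symm
    exact_mod_cast h9.symm
  obtain ⟨a₁, ha₁⟩ := Pell.IsFundamental.exists_of_not_isSquare hdpos hdns
  set sol : Pell.Solution₁ (f : ℤ) := Pell.Solution₁.mk c h (by linear_combination hpell) with hsol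
  set sol₁ : Pell.Solution₁ (f : ℤ) := Pell.Solution₁.mk c₁ h₁ (by linear_combination pell₁)
    with hsol₁
  have hca₁ : c ≤ a₁.x := hmin a₁.x a₁.y (by linarith [ha₁.1]) ha₁.2.1
    (by linear_combination a₁.prop)
  obtain ⟨n, hn⟩ := ha₁.eq_pow_of_nonneg (a := sol)
    (by rw [hsol, Pell.Solution₁.x_mk]; omega) (by rw [hsol, Pell.Solution₁.y_mk]; omega)
  have hsol_eq : sol = a₁ := by
    rcases n with _ | n
    · exfalso
      have hy := congrArg Pell.Solution₁.y hn
      rw [hsol, Pell.Solution₁.y_mk, pow_zero, Pell.Solution₁.y_one] at hy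
      omega
    rcases n with _ | n
    · rwa [pow_one] at hn
    · exfalso
      have hbig := CF12.pow_big hdpos ha₁.1 ha₁.2.1 (show 2 ≤ n + 1 + 1 by omega)
      have hx := congrArg Pell.Solution₁.x hn
      rw [hsol, Pell.Solution₁.x_mk] at hx
      rw [← hx] at hbig
      exact CF12.arith2 (le_trans (CF12.arith4 hca₁ (by omega)) hbig) le_rfl hc2
  obtain ⟨n', hn'⟩ := ha₁.eq_pow_of_nonneg (a := sol₁)
    (by rw [hsol₁, Pell.Solution₁.x_mk]; omega) (by rw [hsol₁, Pell.Solution₁.y_mk]; omega)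
  have hsol₁_eq : sol₁ = a₁ := by
    rcases n' with _ | n'
    · exfalso
      have hy := congrArg Pell.Solution₁.y hn'
      rw [hsol₁, Pell.Solution₁.y_mk, pow_zero, Pell.Solution₁.y_one] at hy
      omega
    rcases n' with _ | n'
    · rwa [pow_one] at hn'
    · exfalso
      have hbig := CF12.pow_big hdpos ha₁.1 ha₁.2.1 (show 2 ≤ n' + 1 + 1 by omega)
      have hax : a₁.x = c := by rw [← hsol_eq, hsol, Pell.Solution₁.x_mk]
      have hx := congrArg Pell.Solution₁.x hn'
      rw [hsol₁, Pell.Solution₁.x_mk] at hx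
      rw [← hx, hax] at hbig
      linarith
  have hsols : sol₁ = sol := hsol₁_eq.trans hsol_eq.symm
  have hcc : c₁ = c := by
    have := congrArg Pell.Solution₁.x hsols
    rwa [hsol, hsol₁, Pell.Solution₁.x_mk, Pell.Solution₁.x_mk] at this
  have hhh : h₁ = h := by
    have := congrArg Pell.Solution₁.y hsols
    rwa [hsol, hsol₁, Pell.Solution₁.y_mk, Pell.Solution₁.y_mk] at this
  have hs0 : s ≠ 0 := (lt_of_lt_of_le zero_lt_one hs1).ne'
  refine mul_left_cancel₀ hs0 ?_
  rw [mul_zero, ← hcc, ← hhh]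
  linear_combination A * e_h - B * e_c + B * pells
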